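/- Conditional law of the second largest: let G₁, G₂ be random cdfs on ℝ such that G₁ is almost surely stochastically smaller than G₂ (G₁⁻¹(u) ≤ G₂⁻¹(u) for all u ∈ (0,1), where Gⱼ⁻¹ is the quantile function), let λ be a deterministic cdf, and let (U, L) be independent random variables, independent of (G₁, G₂), with U uniform on (0,1) and L ∼ λ. Set Xⱼ = Gⱼ⁻¹(U) for j = 1, 2 and let Y be the second largest of (X₁, X₂, L). Then for every y ∈ ℝ, almost surely P(Y ≤ y | G₁, G₂) = λ(y)G₁(y) + (1 − λ(y))G₂(y) and P(Y > y | G₁, G₂) = (1 − λ(y))(1 − G₂(y)) + λ(y)(1 − G₁(y)). -/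

import Mathlib

open MeasureTheory ProbabilityTheory Filter Set Topology

noncomputable section

/-- Conditional probability of a set given a sub-σ-algebra, as a real-valued function. -/
def condProb {Ω : Type*} {m0 : MeasurableSpace Ω} (μ : Measure Ω) (m : MeasurableSpace Ω)
    (A : Set Ω) : Ω → ℝ :=
  μ[A.indicator (fun _ => (1 : ℝ))|m]

/-- The conditional forecast excess distribution `F_t`. -/
def excessCdf (F : ℝ → ℝ) (t x : ℝ) : ℝ :=
  if F t < 1 then (F (x + t) - F t) / (1 - F t) else 1

/-- The excess probability integral transform `Z_F^{(t)}`. -/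
def excessPIT {Ω : Type*} (F : Ω → ℝ → ℝ) (Y : Ω → ℝ) (t : ℝ) (ω : Ω) : ℝ :=
  excessCdf (F ω) t (Y ω - t)

/-- Upper endpoint `x_Y = sup {x : P(Y ≤ x) < 1}` of the outcome, in `EReal`. -/
def upperEndpoint {Ω : Type*} {mΩ : MeasurableSpace Ω} (μ : Measure Ω) (Y : Ω → ℝ) : EReal :=
  sSup (Real.toEReal '' {x : ℝ | μ {ω | Y ω ≤ x} < 1})

/-- Upper endpoint of a (deterministic) cdf. -/
def cdfEndpoint (F : ℝ → ℝ) : EReal :=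
  sSup (Real.toEReal '' {x : ℝ | F x < 1})

/-- The filter of real `t` tending to an extended-real endpoint `e` from below. -/
def toEndpoint (e : EReal) : Filter ℝ :=
  Filter.comap Real.toEReal (𝓝[<] e)

/-- `F` is a random cdf: measurable in `ω`, and almost surely a continuous cdf. -/
def IsRandomCdf {Ω : Type*} {mΩ : MeasurableSpace Ω} (μ : Measure Ω) (F : Ω → ℝ → ℝ) : Prop :=
  (∀ x : ℝ, Measurable fun ω => F ω x) ∧
    ∀ᵐ ω ∂μ, Monotone (F ω) ∧ Continuous (F ω) ∧
      Tendsto (F ω) atTop (𝓝 1) ∧ Tendsto (F ω) atBot (𝓝 0)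

/-- The endpoint assumption for a sub-σ-algebra `m`: the conditional distribution of `Y`
given `m` has (non-random) upper endpoint `x_Y`. -/
def EndpointAssumption {Ω : Type*} {m0 : MeasurableSpace Ω} (μ : Measure Ω)
    (m : MeasurableSpace Ω) (Y : Ω → ℝ) : Prop :=
  (∀ t : ℝ, (t : EReal) < upperEndpoint μ Y →
      ∀ᵐ ω ∂μ, 0 < condProb μ m {ω' | t < Y ω'} ω) ∧
    ∀ᵐ ω ∂μ, condProb μ m {ω' | upperEndpoint μ Y < (Y ω' : EReal)} ω = 0

/-- `F` is tail `m`-calibrated for `Y`. -/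
def TailCalibrated {Ω : Type*} {m0 : MeasurableSpace Ω} (μ : Measure Ω)
    (m : MeasurableSpace Ω) (F : Ω → ℝ → ℝ) (Y : Ω → ℝ) : Prop :=
  (∀ t : ℝ, (t : EReal) < upperEndpoint μ Y →
      ∀ᵐ ω ∂μ, 0 < (μ[fun ω' => 1 - F ω' t|m]) ω) ∧
    ∀ u ∈ Icc (0 : ℝ) 1, ∀ᵐ ω ∂μ,
      Tendsto (fun t : ℝ =>
          condProb μ m {ω' | excessPIT F Y t ω' ≤ u ∧ t < Y ω'} ω /
            (μ[fun ω' => 1 - F ω' t|m]) ω)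
        (toEndpoint (upperEndpoint μ Y)) (𝓝 u)

/-- `F` is probabilistically tail calibrated for `Y`. -/
def ProbTailCalibrated {Ω : Type*} {mΩ : MeasurableSpace Ω} (μ : Measure Ω)
    (F : Ω → ℝ → ℝ) (Y : Ω → ℝ) : Prop :=
  (∀ t : ℝ, (t : EReal) < upperEndpoint μ Y → 0 < ∫ ω, (1 - F ω t) ∂μ) ∧
    ∀ u ∈ Icc (0 : ℝ) 1,
      Tendsto (fun t : ℝ =>
          (μ {ω | excessPIT F Y t ω ≤ u ∧ t < Y ω}).toReal / ∫ ω, (1 - F ω t) ∂μ)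
        (toEndpoint (upperEndpoint μ Y)) (𝓝 u)

/-- `F` is marginally tail calibrated for `Y`. -/
def MargTailCalibrated {Ω : Type*} {mΩ : MeasurableSpace Ω} (μ : Measure Ω)
    (F : Ω → ℝ → ℝ) (Y : Ω → ℝ) : Prop :=
  (∀ t : ℝ, (t : EReal) < upperEndpoint μ Y → 0 < ∫ ω, (1 - F ω t) ∂μ) ∧
    Tendsto (fun t : ℝ =>
        ⨆ x : Ici (0 : ℝ),
          |(μ {ω | t < Y ω ∧ Y ω ≤ t + (x : ℝ)}).toReal / (∫ ω, (1 - F ω t) ∂μ) -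
            (∫ ω in {ω' | t < Y ω'}, excessCdf (F ω) t (x : ℝ) ∂μ) /
              (μ {ω' | t < Y ω'}).toReal|)
      (toEndpoint (upperEndpoint μ Y)) (𝓝 0)

/-- Generalized Pareto survival function `(1 + ξ x)₊^(-1/ξ)` with unit scale and shape `ξ`,
interpreted as `exp (-x)` when `ξ = 0`. -/
def gpdSurv (ξ x : ℝ) : ℝ :=
  if ξ = 0 then Real.exp (-x) else (max (1 + ξ * x) 0) ^ (-(1 : ℝ) / ξ)

/-- The (generalized inverse) quantile function of a cdf. -/
def qfun (G : ℝ → ℝ) (u : ℝ) : ℝ :=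
  sInf {y : ℝ | u ≤ G y}

/-- The second largest (i.e. the median) of three real numbers. -/
def secondLargest (p q r : ℝ) : ℝ :=
  max (min p q) (min (max p q) r)

/-- `G` is a random cdf: coordinatewise measurable, and almost surely a monotone,
right-continuous cdf. -/
def IsRandomCdfRC {Ω : Type*} {mΩ : MeasurableSpace Ω} (μ : Measure Ω)
    (G : Ω → ℝ → ℝ) : Prop :=
  (∀ x : ℝ, Measurable fun ω => G ω x) ∧
    ∀ᵐ ω ∂μ, Monotone (G ω) ∧ (∀ x : ℝ, ContinuousWithinAt (G ω) (Ici x) x) ∧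
      Tendsto (G ω) atTop (𝓝 1) ∧ Tendsto (G ω) atBot (𝓝 0)

/-- The σ-algebra generated by the pair of random cdfs `(G₁, G₂)`. -/
def sigmaOfPair {Ω : Type*} (G₁ G₂ : Ω → ℝ → ℝ) : MeasurableSpace Ω :=
  MeasurableSpace.comap (fun ω => (G₁ ω, G₂ ω)) inferInstance


section AuxLemmas

lemma cdf_mem_Icc {G : ℝ → ℝ} (hmono : Monotone G)
    (htop : Tendsto G atTop (𝓝 1)) (hbot : Tendsto G atBot (𝓝 0)) (x : ℝ) :
    G x ∈ Icc (0 : ℝ) 1 := by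
  constructor
  · exact le_of_tendsto hbot (eventually_atBot.2 ⟨x, fun z hz => hmono hz⟩)
  · exact ge_of_tendsto htop (eventually_atTop.2 ⟨x, fun z hz => hmono hz⟩)

lemma qfun_le_iff {G : ℝ → ℝ} (hmono : Monotone G)
    (hrc : ∀ x : ℝ, ContinuousWithinAt G (Ici x) x)
    (htop : Tendsto G atTop (𝓝 1)) (hbot : Tendsto G atBot (𝓝 0))
    {u : ℝ} (hu : u ∈ Ioo (0 : ℝ) 1) (y : ℝ) :
    qfun G u ≤ y ↔ u ≤ G y := by
  have hne : {z : ℝ | u ≤ G z}.Nonempty := by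
    have h : ∀ᶠ z in atTop, u < G z := htop.eventually (eventually_gt_nhds hu.2)
    obtain ⟨z, hz⟩ := h.exists
    exact ⟨z, hz.le⟩
  have hbdd : BddBelow {z : ℝ | u ≤ G z} := by
    have h : ∀ᶠ z in atBot, G z < u := hbot.eventually (eventually_lt_nhds hu.1)
    obtain ⟨z₀, hz₀⟩ := h.exists
    refine ⟨z₀, fun s hs => ?_⟩
    by_contra hc
    exact absurd (le_trans hs (hmono (le_of_not_ge hc))) (not_le.2 hz₀)
  constructor
  · intro h
    have hgt : ∀ z, y < z → u ≤ G z := by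
      intro z hz
      obtain ⟨s, hs, hsz⟩ := exists_lt_of_csInf_lt hne (lt_of_le_of_lt h hz)
      exact le_trans hs (hmono hsz.le)
    have hten : Tendsto G (𝓝[>] y) (𝓝 (G y)) :=
      (hrc y).mono_left (nhdsWithin_mono y (fun z hz => Set.mem_Ici.2 (le_of_lt (Set.mem_Ioi.1 hz))))
    exact ge_of_tendsto hten (eventually_nhdsWithin_of_forall fun z hz => hgt z hz)
  · intro h
    exact csInf_le hbdd h

end AuxLemmas

/-- the conditional law of the second largest of `(X₁, X₂, L)` given
`(G₁, G₂)` is `λ(y)G₁(y) + (1 - λ(y))G₂(y)`, with the corresponding survival formula. -/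
theorem secondLargest_conditional_law
    {Ω : Type*} {m0 : MeasurableSpace Ω} (μ : Measure Ω) [IsProbabilityMeasure μ]
    (G₁ G₂ : Ω → ℝ → ℝ) (hG₁ : IsRandomCdfRC μ G₁) (hG₂ : IsRandomCdfRC μ G₂)
    (hstoch : ∀ᵐ ω ∂μ, ∀ u ∈ Ioo (0 : ℝ) 1, qfun (G₁ ω) u ≤ qfun (G₂ ω) u)
    (lam : ℝ → ℝ) (hlammono : Monotone lam)
    (hlamtop : Tendsto lam atTop (𝓝 1)) (hlambot : Tendsto lam atBot (𝓝 0))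
    (U L : Ω → ℝ) (hU : Measurable U) (hL : Measurable L)
    (hUunif : ∀ u ∈ Icc (0 : ℝ) 1, μ {ω | U ω ≤ u} = ENNReal.ofReal u)
    (hUrange : μ {ω | 0 < U ω ∧ U ω < 1} = 1)
    (hLlaw : ∀ y : ℝ, (μ {ω | L ω ≤ y}).toReal = lam y)
    (hULindep : IndepFun U L μ)
    (hindep : IndepFun (fun ω => (U ω, L ω)) (fun ω => (G₁ ω, G₂ ω)) μ)
    (Y : Ω → ℝ)
    (hYdef : ∀ ω, Y ω = secondLargest (qfun (G₁ ω) (U ω)) (qfun (G₂ ω) (U ω)) (L ω)) :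
    ∀ y : ℝ,
      (condProb μ (sigmaOfPair G₁ G₂) {ω' | Y ω' ≤ y} =ᵐ[μ]
        fun ω => lam y * G₁ ω y + (1 - lam y) * G₂ ω y) ∧
      (condProb μ (sigmaOfPair G₁ G₂) {ω' | y < Y ω'} =ᵐ[μ]
        fun ω => (1 - lam y) * (1 - G₂ ω y) + lam y * (1 - G₁ ω y)) := by
  classical
  have hmV : Measurable (fun ω => (G₁ ω, G₂ ω)) :=
    (measurable_pi_lambda _ hG₁.1).prodMk (measurable_pi_lambda _ hG₂.1)
  have hmT : Measurable (fun ω => (U ω, L ω)) := hU.prodMk hL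
  have hm : sigmaOfPair G₁ G₂ ≤ m0 := hmV.comap_le
  haveI : SigmaFinite (μ.trim hm) := by
    haveI := isFiniteMeasure_trim (μ := μ) hm
    infer_instance
  intro y
  have hlam : lam y ∈ Icc (0:ℝ) 1 := cdf_mem_Icc hlammono hlamtop hlambot y
  have hma : Measurable (fun ω => G₁ ω y) := hG₁.1 y
  have hmb : Measurable (fun ω => G₂ ω y) := hG₂.1 y
  set g : Ω → ℝ := fun ω => lam y * G₁ ω y + (1 - lam y) * G₂ ω y with hgdef
  set f₀ : Ω → ℝ := fun ω => (if U ω ≤ G₂ ω y then (1:ℝ) else 0) +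
      (if L ω ≤ y then (1:ℝ) else 0) *
        ((if U ω ≤ G₁ ω y then (1:ℝ) else 0) - (if U ω ≤ G₂ ω y then (1:ℝ) else 0)) with hf₀def
  -- a.e. facts
  have hUr : ∀ᵐ ω ∂μ, 0 < U ω ∧ U ω < 1 := by
    have hms : MeasurableSet {ω | 0 < U ω ∧ U ω < 1} :=
      (measurableSet_lt measurable_const hU).inter (measurableSet_lt hU measurable_const)
    rw [ae_iff]
    have h : {ω | ¬(0 < U ω ∧ U ω < 1)} = {ω | 0 < U ω ∧ U ω < 1}ᶜ := by ext ω; simp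
    rw [h]
    exact (prob_compl_eq_zero_iff hms).2 hUrange
  have hae : ({ω' | Y ω' ≤ y}).indicator (fun _ => (1:ℝ)) =ᵐ[μ] f₀ := by
    filter_upwards [hG₁.2, hG₂.2, hstoch, hUr] with ω h₁ h₂ hst hu
    obtain ⟨hmo₁, hrc₁, ht₁, hb₁⟩ := h₁
    obtain ⟨hmo₂, hrc₂, ht₂, hb₂⟩ := h₂
    have hq₁ : qfun (G₁ ω) (U ω) ≤ y ↔ U ω ≤ G₁ ω y :=
      qfun_le_iff hmo₁ hrc₁ ht₁ hb₁ ⟨hu.1, hu.2⟩ y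
    have hq₂ : qfun (G₂ ω) (U ω) ≤ y ↔ U ω ≤ G₂ ω y :=
      qfun_le_iff hmo₂ hrc₂ ht₂ hb₂ ⟨hu.1, hu.2⟩ y
    have hle : qfun (G₁ ω) (U ω) ≤ qfun (G₂ ω) (U ω) := hst _ ⟨hu.1, hu.2⟩
    have hYy : Y ω ≤ y ↔ (U ω ≤ G₁ ω y ∧ (U ω ≤ G₂ ω y ∨ L ω ≤ y)) := by
      rw [hYdef ω, show secondLargest (qfun (G₁ ω) (U ω)) (qfun (G₂ ω) (U ω)) (L ω)
          = max (qfun (G₁ ω) (U ω)) (min (qfun (G₂ ω) (U ω)) (L ω)) by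
        simp [secondLargest, min_eq_left hle, max_eq_right hle]]
      rw [max_le_iff, min_le_iff, hq₁, hq₂]
    have hBA : U ω ≤ G₂ ω y → U ω ≤ G₁ ω y := fun h => hq₁.1 (le_trans hle (hq₂.2 h))
    rw [Set.indicator_apply]
    simp only [Set.mem_setOf_eq, hf₀def]
    by_cases hA : U ω ≤ G₁ ω y <;> by_cases hB : U ω ≤ G₂ ω y <;> by_cases hC : L ω ≤ y <;>
      simp [hYy, hA, hB, hC] <;> exact absurd (hBA hB) hA
  have hmf₀ : Measurable f₀ := by
    have h1 : Measurable (fun ω => if U ω ≤ G₂ ω y then (1:ℝ) else 0) :=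
      Measurable.ite (measurableSet_le hU hmb) measurable_const measurable_const
    have h2 : Measurable (fun ω => if U ω ≤ G₁ ω y then (1:ℝ) else 0) :=
      Measurable.ite (measurableSet_le hU hma) measurable_const measurable_const
    have h3 : Measurable (fun ω => if L ω ≤ y then (1:ℝ) else 0) :=
      Measurable.ite (measurableSet_le hL measurable_const) measurable_const measurable_const
    exact h1.add (h3.mul (h2.sub h1))
  have hif₀ : Integrable f₀ μ := by
    refine (integrable_const (3:ℝ)).mono' hmf₀.aestronglyMeasurable (ae_of_all _ fun ω => ?_)
    simp only [hf₀def, Real.norm_eq_abs]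
    split_ifs <;> norm_num
  have hiind : Integrable (({ω' | Y ω' ≤ y}).indicator (fun _ => (1:ℝ))) μ :=
    hif₀.congr hae.symm
  have hgm' : Measurable[sigmaOfPair G₁ G₂] g := by
    have hV : Measurable[sigmaOfPair G₁ G₂] (fun ω => (G₁ ω, G₂ ω)) := comap_measurable _
    have hVa : Measurable[sigmaOfPair G₁ G₂] (fun ω => G₁ ω y) :=
      ((measurable_pi_apply y).comp measurable_fst).comp hV
    have hVb : Measurable[sigmaOfPair G₁ G₂] (fun ω => G₂ ω y) :=
      ((measurable_pi_apply y).comp measurable_snd).comp hV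
    exact (measurable_const.mul hVa).add (measurable_const.mul hVb)
  have hab : ∀ᵐ ω ∂μ, G₁ ω y ∈ Icc (0:ℝ) 1 ∧ G₂ ω y ∈ Icc (0:ℝ) 1 := by
    filter_upwards [hG₁.2, hG₂.2] with ω h₁ h₂
    exact ⟨cdf_mem_Icc h₁.1 h₁.2.2.1 h₁.2.2.2 y, cdf_mem_Icc h₂.1 h₂.2.2.1 h₂.2.2.2 y⟩
  have hgi : Integrable g μ := by
    refine (integrable_const (1:ℝ)).mono'
      ((hgm'.mono hm le_rfl).stronglyMeasurable).aestronglyMeasurable ?_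
    filter_upwards [hab] with ω hω
    obtain ⟨⟨ha0, ha1⟩, ⟨hb0, hb1⟩⟩ := hω
    rw [Real.norm_eq_abs, abs_le]
    constructor <;> simp only [hgdef] <;> nlinarith [hlam.1, hlam.2]
  -- law machinery
  have hprod : μ.map (fun ω => ((U ω, L ω), (G₁ ω, G₂ ω)))
      = (μ.map (fun ω => (U ω, L ω))).prod (μ.map (fun ω => (G₁ ω, G₂ ω))) :=
    (indepFun_iff_map_prod_eq_prod_map_map hmT.aemeasurable hmV.aemeasurable).1 hindep
  have hprodUL : μ.map (fun ω => (U ω, L ω)) = (μ.map U).prod (μ.map L) :=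
    (indepFun_iff_map_prod_eq_prod_map_map hU.aemeasurable hL.aemeasurable).1 hULindep
  haveI : IsProbabilityMeasure (μ.map (fun ω => (U ω, L ω))) :=
    Measure.isProbabilityMeasure_map hmT.aemeasurable
  haveI : IsProbabilityMeasure (μ.map (fun ω => (G₁ ω, G₂ ω))) :=
    Measure.isProbabilityMeasure_map hmV.aemeasurable
  haveI : IsProbabilityMeasure (μ.map U) := Measure.isProbabilityMeasure_map hU.aemeasurable
  haveI : IsProbabilityMeasure (μ.map L) := Measure.isProbabilityMeasure_map hL.aemeasurable
  have hIc : ∀ c : ℝ, c ∈ Icc (0:ℝ) 1 →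
      ∫ u, (if u ≤ c then (1:ℝ) else 0) ∂(μ.map U) = c := by
    intro c hc
    have h : (fun u : ℝ => if u ≤ c then (1:ℝ) else 0) = (Iic c).indicator (fun _ => (1:ℝ)) := by
      funext u; simp [Set.indicator_apply]
    rw [h, integral_indicator_const _ measurableSet_Iic, measureReal_def, Measure.map_apply hU measurableSet_Iic]
    have h2 : U ⁻¹' Iic c = {ω | U ω ≤ c} := rfl
    rw [h2, hUunif c hc]
    simp [ENNReal.toReal_ofReal hc.1]
  have hciInt : ∀ c : ℝ, Integrable (fun u : ℝ => if u ≤ c then (1:ℝ) else 0) (μ.map U) := by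
    intro c
    have h : (fun u : ℝ => if u ≤ c then (1:ℝ) else 0) = (Iic c).indicator (fun _ => (1:ℝ)) := by
      funext u; simp [Set.indicator_apply]
    rw [h]
    exact (integrable_const 1).indicator measurableSet_Iic
  have hIL : ∫ l, (if l ≤ y then (1:ℝ) else 0) ∂(μ.map L) = lam y := by
    have h : (fun l : ℝ => if l ≤ y then (1:ℝ) else 0) = (Iic y).indicator (fun _ => (1:ℝ)) := by
      funext l; simp [Set.indicator_apply]
    rw [h, integral_indicator_const _ measurableSet_Iic, measureReal_def, Measure.map_apply hL measurableSet_Iic]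
    have h2 : L ⁻¹' Iic y = {ω | L ω ≤ y} := rfl
    rw [h2]
    simp [hLlaw y]
  have hInner : ∀ p q : ℝ, p ∈ Icc (0:ℝ) 1 → q ∈ Icc (0:ℝ) 1 →
      ∫ t : ℝ × ℝ, ((if t.1 ≤ q then (1:ℝ) else 0) +
        (if t.2 ≤ y then (1:ℝ) else 0) *
          ((if t.1 ≤ p then (1:ℝ) else 0) - (if t.1 ≤ q then (1:ℝ) else 0)))
        ∂(μ.map (fun ω => (U ω, L ω)))
      = lam y * p + (1 - lam y) * q := by
    intro p q hp hq
    rw [hprodUL]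
    have hi1 : Integrable (fun t : ℝ × ℝ => (if t.1 ≤ q then (1:ℝ) else 0))
        ((μ.map U).prod (μ.map L)) := by
      refine (integrable_const (1:ℝ)).mono'
        ((Measurable.ite (measurableSet_le measurable_fst measurable_const)
          measurable_const measurable_const).aestronglyMeasurable) (ae_of_all _ fun t => ?_)
      rw [Real.norm_eq_abs]; split_ifs <;> norm_num
    have hi2 : Integrable (fun t : ℝ × ℝ => (if t.2 ≤ y then (1:ℝ) else 0) *
        ((if t.1 ≤ p then (1:ℝ) else 0) - (if t.1 ≤ q then (1:ℝ) else 0)))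
        ((μ.map U).prod (μ.map L)) := by
      refine (integrable_const (2:ℝ)).mono'
        (((Measurable.ite (measurableSet_le measurable_snd measurable_const)
            measurable_const measurable_const).mul
          ((Measurable.ite (measurableSet_le measurable_fst measurable_const)
            measurable_const measurable_const).sub
           (Measurable.ite (measurableSet_le measurable_fst measurable_const)
            measurable_const measurable_const))).aestronglyMeasurable) (ae_of_all _ fun t => ?_)
      rw [Real.norm_eq_abs]; split_ifs <;> norm_num
    rw [integral_add hi1 hi2]
    have e1 : ∫ t : ℝ × ℝ, (if t.1 ≤ q then (1:ℝ) else 0)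
        ∂((μ.map U).prod (μ.map L)) = q := by
      have h := integral_prod_mul (μ := Measure.map U μ) (ν := Measure.map L μ)
        (fun u : ℝ => if u ≤ q then (1:ℝ) else 0) (fun _ : ℝ => (1:ℝ))
      rw [hIc q hq] at h
      simp only [integral_const, probReal_univ, ENNReal.toReal_one, one_smul,
        smul_eq_mul, mul_one] at h
      exact h
    have e2 : ∫ t : ℝ × ℝ, (if t.2 ≤ y then (1:ℝ) else 0) *
        ((if t.1 ≤ p then (1:ℝ) else 0) - (if t.1 ≤ q then (1:ℝ) else 0))
        ∂((μ.map U).prod (μ.map L)) = (p - q) * lam y := by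
      have h := integral_prod_mul (μ := Measure.map U μ) (ν := Measure.map L μ)
        (fun u : ℝ => (if u ≤ p then (1:ℝ) else 0) - (if u ≤ q then (1:ℝ) else 0))
        (fun l : ℝ => if l ≤ y then (1:ℝ) else 0)
      rw [integral_sub (hciInt p) (hciInt q), hIc p hp, hIc q hq, hIL] at h
      rw [show (fun t : ℝ × ℝ => (if t.2 ≤ y then (1:ℝ) else 0) *
          ((if t.1 ≤ p then (1:ℝ) else 0) - (if t.1 ≤ q then (1:ℝ) else 0)))
          = fun t : ℝ × ℝ =>
            ((fun u : ℝ => (if u ≤ p then (1:ℝ) else 0) - (if u ≤ q then (1:ℝ) else 0)) t.1) *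
            ((fun l : ℝ => if l ≤ y then (1:ℝ) else 0) t.2) from funext fun t => by
        simp only []; ring]
      exact h
    rw [e1, e2]; ring
  -- the key set-integral identity
  have hkey : ∀ s : Set Ω, MeasurableSet[sigmaOfPair G₁ G₂] s →
      ∫ ω in s, g ω ∂μ = ∫ ω in s, f₀ ω ∂μ := by
    intro s hs
    obtain ⟨B, hB, rfl⟩ := hs
    set φ : (ℝ × ℝ) × ((ℝ → ℝ) × (ℝ → ℝ)) → ℝ := fun z =>
      ((if z.1.1 ≤ z.2.2 y then (1:ℝ) else 0) +
       (if z.1.2 ≤ y then (1:ℝ) else 0) *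
         ((if z.1.1 ≤ z.2.1 y then (1:ℝ) else 0) - (if z.1.1 ≤ z.2.2 y then (1:ℝ) else 0))) *
      (if z.2 ∈ B then (1:ℝ) else 0) with hφdef
    set ψ : (ℝ → ℝ) × (ℝ → ℝ) → ℝ := fun c =>
      (lam y * c.1 y + (1 - lam y) * c.2 y) * (if c ∈ B then (1:ℝ) else 0) with hψdef
    have hmφ : Measurable φ := by
      have e2 : Measurable (fun z : (ℝ × ℝ) × ((ℝ → ℝ) × (ℝ → ℝ)) => z.2.2 y) :=
        (measurable_pi_apply y).comp (measurable_snd.comp measurable_snd)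
      have e1 : Measurable (fun z : (ℝ × ℝ) × ((ℝ → ℝ) × (ℝ → ℝ)) => z.2.1 y) :=
        (measurable_pi_apply y).comp (measurable_fst.comp measurable_snd)
      have u1 : Measurable (fun z : (ℝ × ℝ) × ((ℝ → ℝ) × (ℝ → ℝ)) => z.1.1) :=
        measurable_fst.comp measurable_fst
      have l1 : Measurable (fun z : (ℝ × ℝ) × ((ℝ → ℝ) × (ℝ → ℝ)) => z.1.2) :=
        measurable_snd.comp measurable_fst
      have hB' : MeasurableSet {z : (ℝ × ℝ) × ((ℝ → ℝ) × (ℝ → ℝ)) | z.2 ∈ B} :=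
        measurable_snd hB
      exact ((Measurable.ite (measurableSet_le u1 e2) measurable_const measurable_const).add
        ((Measurable.ite (measurableSet_le l1 measurable_const)
            measurable_const measurable_const).mul
         ((Measurable.ite (measurableSet_le u1 e1) measurable_const measurable_const).sub
          (Measurable.ite (measurableSet_le u1 e2)
            measurable_const measurable_const)))).mul
        (Measurable.ite hB' measurable_const measurable_const)
    have hmψ : Measurable ψ := by
      have e1 : Measurable (fun c : (ℝ → ℝ) × (ℝ → ℝ) => c.1 y) :=
        (measurable_pi_apply y).comp measurable_fst
      have e2 : Measurable (fun c : (ℝ → ℝ) × (ℝ → ℝ) => c.2 y) :=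
        (measurable_pi_apply y).comp measurable_snd
      exact ((measurable_const.mul e1).add (measurable_const.mul e2)).mul
        (Measurable.ite hB measurable_const measurable_const)
    have hmW : Measurable (fun ω => ((U ω, L ω), (G₁ ω, G₂ ω))) := hmT.prodMk hmV
    -- LHS
    have hR : ∫ ω in (fun ω => (G₁ ω, G₂ ω)) ⁻¹' B, f₀ ω ∂μ
        = ∫ ω, φ ((U ω, L ω), (G₁ ω, G₂ ω)) ∂μ := by
      rw [← integral_indicator (hmV hB)]
      congr 1; funext ω
      by_cases hω : (G₁ ω, G₂ ω) ∈ B <;>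
        simp [Set.indicator_apply, hω, hφdef, hf₀def]
    have hLL : ∫ ω in (fun ω => (G₁ ω, G₂ ω)) ⁻¹' B, g ω ∂μ
        = ∫ ω, ψ (G₁ ω, G₂ ω) ∂μ := by
      rw [← integral_indicator (hmV hB)]
      congr 1; funext ω
      by_cases hω : (G₁ ω, G₂ ω) ∈ B <;>
        simp [Set.indicator_apply, hω, hψdef, hgdef]
    have hmap1 : ∫ ω, φ ((U ω, L ω), (G₁ ω, G₂ ω)) ∂μ
        = ∫ z, φ z ∂((μ.map (fun ω => (U ω, L ω))).prod (μ.map (fun ω => (G₁ ω, G₂ ω)))) := by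
      rw [← hprod, integral_map hmW.aemeasurable hmφ.aestronglyMeasurable]
    have hφint : Integrable φ
        ((μ.map (fun ω => (U ω, L ω))).prod (μ.map (fun ω => (G₁ ω, G₂ ω)))) := by
      refine (integrable_const (3:ℝ)).mono' hmφ.aestronglyMeasurable (ae_of_all _ fun z => ?_)
      simp only [hφdef, Real.norm_eq_abs]
      split_ifs <;> norm_num
    have hfub : ∫ z, φ z ∂((μ.map (fun ω => (U ω, L ω))).prod (μ.map (fun ω => (G₁ ω, G₂ ω))))
        = ∫ c, (∫ t, φ (t, c) ∂(μ.map (fun ω => (U ω, L ω))))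
            ∂(μ.map (fun ω => (G₁ ω, G₂ ω))) :=
      integral_prod_symm φ hφint
    have hmemE : ∀ᵐ c ∂(μ.map (fun ω => (G₁ ω, G₂ ω))),
        c.1 y ∈ Icc (0:ℝ) 1 ∧ c.2 y ∈ Icc (0:ℝ) 1 := by
      rw [MeasureTheory.ae_map_iff hmV.aemeasurable]
      · exact hab
      · exact MeasurableSet.inter
          (((measurable_pi_apply y).comp measurable_fst) measurableSet_Icc)
          (((measurable_pi_apply y).comp measurable_snd) measurableSet_Icc)
    have hae2 : ∀ᵐ c ∂(μ.map (fun ω => (G₁ ω, G₂ ω))),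
        (∫ t, φ (t, c) ∂(μ.map (fun ω => (U ω, L ω)))) = ψ c := by
      filter_upwards [hmemE] with c hc
      obtain ⟨hc1, hc2⟩ := hc
      have h1 : (fun t : ℝ × ℝ => φ (t, c)) = fun t : ℝ × ℝ =>
          ((if t.1 ≤ c.2 y then (1:ℝ) else 0) +
           (if t.2 ≤ y then (1:ℝ) else 0) *
             ((if t.1 ≤ c.1 y then (1:ℝ) else 0) - (if t.1 ≤ c.2 y then (1:ℝ) else 0))) *
          (if c ∈ B then (1:ℝ) else 0) := rfl
      rw [h1, integral_mul_const, hInner (c.1 y) (c.2 y) hc1 hc2]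
    have hout : ∫ c, (∫ t, φ (t, c) ∂(μ.map (fun ω => (U ω, L ω))))
          ∂(μ.map (fun ω => (G₁ ω, G₂ ω)))
        = ∫ c, ψ c ∂(μ.map (fun ω => (G₁ ω, G₂ ω))) :=
      integral_congr_ae hae2
    have hmap2 : ∫ c, ψ c ∂(μ.map (fun ω => (G₁ ω, G₂ ω)))
        = ∫ ω, ψ (G₁ ω, G₂ ω) ∂μ :=
      integral_map hmV.aemeasurable hmψ.aestronglyMeasurable
    rw [hLL, ← hmap2, ← hout, ← hfub, ← hmap1, ← hR]
  -- conclude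
  have h5 : g =ᵐ[μ] μ[f₀|sigmaOfPair G₁ G₂] :=
    ae_eq_condExp_of_forall_setIntegral_eq hm hif₀ (fun s _ _ => hgi.integrableOn)
      (fun s hs _ => hkey s hs)
      (StronglyMeasurable.aestronglyMeasurable hgm'.stronglyMeasurable)
  have hpart1 : condProb μ (sigmaOfPair G₁ G₂) {ω' | Y ω' ≤ y} =ᵐ[μ] g :=
    (condExp_congr_ae hae).trans h5.symm
  refine ⟨hpart1, ?_⟩
  have hcompl : ({ω' | y < Y ω'}).indicator (fun _ => (1:ℝ))
      = (fun _ => (1:ℝ)) - ({ω' | Y ω' ≤ y}).indicator (fun _ => (1:ℝ)) := by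
    funext ω
    by_cases hω : Y ω ≤ y <;> simp [Set.indicator_apply, hω, not_le]
  have hsub : condProb μ (sigmaOfPair G₁ G₂) {ω' | y < Y ω'} =ᵐ[μ]
      (fun _ => (1:ℝ)) - μ[({ω' | Y ω' ≤ y}).indicator (fun _ => (1:ℝ))|sigmaOfPair G₁ G₂] := by
    unfold condProb
    rw [hcompl]
    refine (condExp_sub (integrable_const (1:ℝ)) hiind (sigmaOfPair G₁ G₂)).trans ?_
    rw [condExp_const hm]
  refine hsub.trans ?_
  filter_upwards [hpart1] with ω hω
  have hω' : (μ[({ω' | Y ω' ≤ y}).indicator (fun _ => (1:ℝ))|sigmaOfPair G₁ G₂]) ω = g ω := hω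
  simp only [Pi.sub_apply, hω', hgdef]
  ring
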